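/- Let C ∈ ℝ^{m×m×m} have trivial real stabilizer, meaning every invertible Z ∈ ℝ^{m×m} with [[C; Z, Z, Z]] = C equals the identity. Let X ∈ ℝ^{d×m} have rank m, and let X⁺ = (XᵀX)⁻¹Xᵀ denote its pseudo-inverse. Suppose S ∈ ℝ^{d×d×d} is a non-identifiable signature tensor, i.e. there exist two distinct matrices Y₁ ≠ Y₂ in ℝ^{d×m} with [[C; Y₁, Y₁, Y₁]] = [[C; Y₂, Y₂, Y₂]] = S. Then for each i ∈ {1,2,3} there exists a matrix A ∈ ℝ^{m×m²} of rank strictly less than m such that ‖C⁽ⁱ⁾ − A‖_F ≤ ‖X⁺‖_F³ · ‖[[C; X, X, X]] − S‖_F. -/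

import Mathlib

set_option maxHeartbeats 1000000


open Matrix

/-- The congruence action of a `d × m` matrix on an `m × m × m` tensor. -/
def congrAct3 {m d : ℕ} (C : Fin m → Fin m → Fin m → ℝ)
    (X : Matrix (Fin d) (Fin m) ℝ) : Fin d → Fin d → Fin d → ℝ :=
  fun α β γ => ∑ i, ∑ j, ∑ k, C i j k * X α i * X β j * X γ k

/-- Frobenius norm of a matrix. -/
noncomputable def frobM {a b : Type*} [Fintype a] [Fintype b] (M : Matrix a b ℝ) : ℝ :=
  Real.sqrt (∑ i, ∑ j, M i j ^ 2)

/-- Frobenius norm of an order three tensor. -/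
noncomputable def frobT {d : ℕ} (T : Fin d → Fin d → Fin d → ℝ) : ℝ :=
  Real.sqrt (∑ i, ∑ j, ∑ k, T i j k ^ 2)

/-! ### auxiliary: mode actions -/

def act1 {a a' b c : Type*} [Fintype a] (P : Matrix a' a ℝ) (T : a → b → c → ℝ) : a' → b → c → ℝ :=
  fun α j k => ∑ i, P α i * T i j k
def act2 {a b b' c : Type*} [Fintype b] (P : Matrix b' b ℝ) (T : a → b → c → ℝ) : a → b' → c → ℝ :=
  fun i β k => ∑ j, P β j * T i j k
def act3 {a b c c' : Type*} [Fintype c] (P : Matrix c' c ℝ) (T : a → b → c → ℝ) : a → b → c' → ℝ :=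
  fun i j γ => ∑ k, P γ k * T i j k

lemma congrAct3_eq_act {m d : ℕ} (C : Fin m → Fin m → Fin m → ℝ) (P : Matrix (Fin d) (Fin m) ℝ) :
    congrAct3 C P = act1 P (act2 P (act3 P C)) := by
  funext α β γ
  simp only [congrAct3, act1, act2, act3, Finset.mul_sum]
  refine Finset.sum_congr rfl fun i _ => Finset.sum_congr rfl fun j _ =>
    Finset.sum_congr rfl fun k _ => by ring

lemma act1_mul {a a' a'' b c : Type*} [Fintype a] [Fintype a']
    (A : Matrix a'' a' ℝ) (B : Matrix a' a ℝ) (T : a → b → c → ℝ) :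
    act1 (A * B) T = act1 A (act1 B T) := by
  funext α j k
  simp only [act1, Matrix.mul_apply, Finset.sum_mul, Finset.mul_sum]
  rw [Finset.sum_comm]
  exact Finset.sum_congr rfl fun i _ => Finset.sum_congr rfl fun p _ => by ring

lemma act2_mul {a b b' b'' c : Type*} [Fintype b] [Fintype b']
    (A : Matrix b'' b' ℝ) (B : Matrix b' b ℝ) (T : a → b → c → ℝ) :
    act2 (A * B) T = act2 A (act2 B T) := by
  funext i β k
  simp only [act2, Matrix.mul_apply, Finset.sum_mul, Finset.mul_sum]
  rw [Finset.sum_comm]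
  exact Finset.sum_congr rfl fun j _ => Finset.sum_congr rfl fun p _ => by ring

lemma act3_mul {a b c c' c'' : Type*} [Fintype c] [Fintype c']
    (A : Matrix c'' c' ℝ) (B : Matrix c' c ℝ) (T : a → b → c → ℝ) :
    act3 (A * B) T = act3 A (act3 B T) := by
  funext i j γ
  simp only [act3, Matrix.mul_apply, Finset.sum_mul, Finset.mul_sum]
  rw [Finset.sum_comm]
  exact Finset.sum_congr rfl fun k _ => Finset.sum_congr rfl fun p _ => by ring

lemma act1_act2 {a a' b b' c : Type*} [Fintype a] [Fintype b]
    (A : Matrix a' a ℝ) (B : Matrix b' b ℝ) (T : a → b → c → ℝ) :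
    act1 A (act2 B T) = act2 B (act1 A T) := by
  funext α β k
  simp only [act1, act2, Finset.mul_sum]
  rw [Finset.sum_comm]
  exact Finset.sum_congr rfl fun i _ => Finset.sum_congr rfl fun j _ => by ring

lemma act1_act3 {a a' b c c' : Type*} [Fintype a] [Fintype c]
    (A : Matrix a' a ℝ) (B : Matrix c' c ℝ) (T : a → b → c → ℝ) :
    act1 A (act3 B T) = act3 B (act1 A T) := by
  funext α j γ
  simp only [act1, act3, Finset.mul_sum]
  rw [Finset.sum_comm]
  exact Finset.sum_congr rfl fun i _ => Finset.sum_congr rfl fun k _ => by ring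

lemma act2_act3 {a b b' c c' : Type*} [Fintype b] [Fintype c]
    (A : Matrix b' b ℝ) (B : Matrix c' c ℝ) (T : a → b → c → ℝ) :
    act2 A (act3 B T) = act3 B (act2 A T) := by
  funext i β γ
  simp only [act2, act3, Finset.mul_sum]
  rw [Finset.sum_comm]
  exact Finset.sum_congr rfl fun j _ => Finset.sum_congr rfl fun k _ => by ring

lemma congrAct3_comp {m d e : ℕ} (C : Fin m → Fin m → Fin m → ℝ)
    (B : Matrix (Fin d) (Fin m) ℝ) (A : Matrix (Fin e) (Fin d) ℝ) :
    congrAct3 C (A * B) = congrAct3 (congrAct3 C B) A := by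
  rw [congrAct3_eq_act C (A * B), congrAct3_eq_act (congrAct3 C B) A, congrAct3_eq_act C B,
    act1_mul, act2_mul, act3_mul]
  rw [act1_act2 B A, show act2 B (act3 A (act3 B C)) = act3 A (act2 B (act3 B C)) from
    act2_act3 B A _, act1_act3 B A]

lemma congrAct3_one {m : ℕ} (C : Fin m → Fin m → Fin m → ℝ) : congrAct3 C 1 = C := by
  funext i j k
  simp [congrAct3, Matrix.one_apply, Finset.sum_ite_eq, mul_ite, ite_mul]

lemma congrAct3_sub {m d : ℕ} (C C' : Fin m → Fin m → Fin m → ℝ)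
    (P : Matrix (Fin d) (Fin m) ℝ) :
    congrAct3 (fun i j k => C i j k - C' i j k) P =
      fun α β γ => congrAct3 C P α β γ - congrAct3 C' P α β γ := by
  funext α β γ
  simp only [congrAct3, ← Finset.sum_sub_distrib]
  refine Finset.sum_congr rfl fun i _ => Finset.sum_congr rfl fun j _ =>
    Finset.sum_congr rfl fun k _ => by ring

/-! ### sums of squares -/

def sq3 {a b c : Type*} [Fintype a] [Fintype b] [Fintype c] (T : a → b → c → ℝ) : ℝ :=
  ∑ i, ∑ j, ∑ k, T i j k ^ 2
def sqM {a b : Type*} [Fintype a] [Fintype b] (M : Matrix a b ℝ) : ℝ :=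
  ∑ i, ∑ j, M i j ^ 2

lemma sq3_nonneg {a b c : Type*} [Fintype a] [Fintype b] [Fintype c] (T : a → b → c → ℝ) :
    0 ≤ sq3 T :=
  Finset.sum_nonneg fun _ _ => Finset.sum_nonneg fun _ _ => Finset.sum_nonneg fun _ _ => sq_nonneg _

lemma sqM_nonneg {a b : Type*} [Fintype a] [Fintype b] (M : Matrix a b ℝ) : 0 ≤ sqM M :=
  Finset.sum_nonneg fun _ _ => Finset.sum_nonneg fun _ _ => sq_nonneg _

lemma sum3_rot {a b c : Type*} [Fintype a] [Fintype b] [Fintype c] (f : a → b → c → ℝ) :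
    ∑ j : b, ∑ k : c, ∑ i : a, f i j k = ∑ i, ∑ j, ∑ k, f i j k := by
  rw [show (∑ j : b, ∑ k : c, ∑ i : a, f i j k) = ∑ j : b, ∑ i : a, ∑ k : c, f i j k from
    Finset.sum_congr rfl fun j _ => Finset.sum_comm]
  exact Finset.sum_comm

lemma sq3_act1 {a a' b c : Type*} [Fintype a] [Fintype a'] [Fintype b] [Fintype c]
    (P : Matrix a' a ℝ) (T : a → b → c → ℝ) :
    sq3 (act1 P T) ≤ sqM P * sq3 T := by
  have step : sq3 (act1 P T) ≤ ∑ α, ∑ j, ∑ k, (∑ i, P α i ^ 2) * (∑ i, T i j k ^ 2) := by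
    refine Finset.sum_le_sum fun α _ => Finset.sum_le_sum fun j _ => Finset.sum_le_sum fun k _ => ?_
    exact Finset.sum_mul_sq_le_sq_mul_sq _ _ _
  refine step.trans (le_of_eq ?_)
  have e1 : ∀ α, (∑ j, ∑ k, (∑ i, P α i ^ 2) * (∑ i, T i j k ^ 2)) =
      (∑ i, P α i ^ 2) * (∑ j, ∑ k, ∑ i, T i j k ^ 2) := by
    intro α
    rw [Finset.mul_sum]
    exact Finset.sum_congr rfl fun j _ => (Finset.mul_sum _ _ _).symm
  calc (∑ α, ∑ j, ∑ k, (∑ i, P α i ^ 2) * (∑ i, T i j k ^ 2))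
      = ∑ α, (∑ i, P α i ^ 2) * (∑ j, ∑ k, ∑ i, T i j k ^ 2) :=
        Finset.sum_congr rfl fun α _ => e1 α
    _ = (∑ α, ∑ i, P α i ^ 2) * (∑ j, ∑ k, ∑ i, T i j k ^ 2) := (Finset.sum_mul _ _ _).symm
    _ = sqM P * sq3 T := by rw [sum3_rot]; rfl

lemma sq3_act2 {a b b' c : Type*} [Fintype a] [Fintype b] [Fintype b'] [Fintype c]
    (P : Matrix b' b ℝ) (T : a → b → c → ℝ) :
    sq3 (act2 P T) ≤ sqM P * sq3 T := by
  have step : sq3 (act2 P T) ≤ ∑ i, ∑ β, ∑ k, (∑ j, P β j ^ 2) * (∑ j, T i j k ^ 2) := by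
    refine Finset.sum_le_sum fun i _ => Finset.sum_le_sum fun β _ => Finset.sum_le_sum fun k _ => ?_
    exact Finset.sum_mul_sq_le_sq_mul_sq _ _ _
  refine step.trans (le_of_eq ?_)
  calc (∑ i, ∑ β, ∑ k, (∑ j, P β j ^ 2) * (∑ j, T i j k ^ 2))
      = ∑ i, (∑ β, ∑ j, P β j ^ 2) * (∑ k, ∑ j, T i j k ^ 2) := by
        refine Finset.sum_congr rfl fun i _ => ?_
        rw [Finset.sum_mul]
        refine Finset.sum_congr rfl fun β _ => ?_
        rw [Finset.mul_sum]
    _ = (∑ β, ∑ j, P β j ^ 2) * ∑ i, ∑ k, ∑ j, T i j k ^ 2 := (Finset.mul_sum _ _ _).symm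
    _ = sqM P * sq3 T := by
        congr 1
        exact Finset.sum_congr rfl fun i _ => Finset.sum_comm

lemma sq3_act3 {a b c c' : Type*} [Fintype a] [Fintype b] [Fintype c] [Fintype c']
    (P : Matrix c' c ℝ) (T : a → b → c → ℝ) :
    sq3 (act3 P T) ≤ sqM P * sq3 T := by
  have step : sq3 (act3 P T) ≤ ∑ i, ∑ j, ∑ γ, (∑ k, P γ k ^ 2) * (∑ k, T i j k ^ 2) := by
    refine Finset.sum_le_sum fun i _ => Finset.sum_le_sum fun j _ => Finset.sum_le_sum fun γ _ => ?_
    exact Finset.sum_mul_sq_le_sq_mul_sq _ _ _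
  refine step.trans (le_of_eq ?_)
  calc (∑ i, ∑ j, ∑ γ, (∑ k, P γ k ^ 2) * (∑ k, T i j k ^ 2))
      = ∑ i, ∑ j, (∑ γ, ∑ k, P γ k ^ 2) * (∑ k, T i j k ^ 2) := by
        refine Finset.sum_congr rfl fun i _ => Finset.sum_congr rfl fun j _ => ?_
        rw [Finset.sum_mul]
    _ = (∑ γ, ∑ k, P γ k ^ 2) * (∑ i, ∑ j, ∑ k, T i j k ^ 2) := by
        rw [Finset.mul_sum]
        refine Finset.sum_congr rfl fun i _ => (Finset.mul_sum _ _ _).symm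
    _ = sqM P * sq3 T := rfl

lemma sq3_congrAct3 {m d : ℕ} (E : Fin d → Fin d → Fin d → ℝ) (P : Matrix (Fin m) (Fin d) ℝ) :
    sq3 (congrAct3 E P) ≤ sqM P ^ 3 * sq3 E := by
  rw [congrAct3_eq_act]
  calc sq3 (act1 P (act2 P (act3 P E))) ≤ sqM P * sq3 (act2 P (act3 P E)) := sq3_act1 P _
    _ ≤ sqM P * (sqM P * sq3 (act3 P E)) :=
        mul_le_mul_of_nonneg_left (sq3_act2 P _) (sqM_nonneg P)
    _ ≤ sqM P * (sqM P * (sqM P * sq3 E)) :=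
        mul_le_mul_of_nonneg_left
          (mul_le_mul_of_nonneg_left (sq3_act3 P E) (sqM_nonneg P)) (sqM_nonneg P)
    _ = sqM P ^ 3 * sq3 E := by ring

lemma frobT_eq_sqrt_sq3 {d : ℕ} (T : Fin d → Fin d → Fin d → ℝ) :
    frobT T = Real.sqrt (sq3 T) := rfl

lemma frobM_eq_sqrt_sqM {a b : Type*} [Fintype a] [Fintype b] (M : Matrix a b ℝ) :
    frobM M = Real.sqrt (sqM M) := rfl

lemma frobT_congrAct3_le {m d : ℕ} (E : Fin d → Fin d → Fin d → ℝ)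
    (P : Matrix (Fin m) (Fin d) ℝ) :
    frobT (congrAct3 E P) ≤ frobM P ^ 3 * frobT E := by
  rw [frobT_eq_sqrt_sq3, frobT_eq_sqrt_sq3, frobM_eq_sqrt_sqM]
  have h := sq3_congrAct3 E P
  refine (Real.sqrt_le_sqrt h).trans (le_of_eq ?_)
  rw [show sqM P ^ 3 * sq3 E = sqM P ^ 2 * (sqM P * sq3 E) by ring,
    Real.sqrt_mul (sq_nonneg _), Real.sqrt_sq (sqM_nonneg P),
    Real.sqrt_mul (sqM_nonneg P)]
  have : Real.sqrt (sqM P) ^ 3 = sqM P * Real.sqrt (sqM P) := by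
    rw [pow_succ, pow_two, Real.mul_self_sqrt (sqM_nonneg P)]
  rw [this]; ring

/-! ### flattening and rank -/

def flat1 {m : ℕ} (C : Fin m → Fin m → Fin m → ℝ) : Matrix (Fin m) (Fin m × Fin m) ℝ :=
  Matrix.of fun i p => C i p.1 p.2

def flatW {m e : ℕ} (C : Fin m → Fin m → Fin m → ℝ) (M : Matrix (Fin e) (Fin m) ℝ) :
    Matrix (Fin m) (Fin e × Fin e) ℝ :=
  Matrix.of fun i p => ∑ j, ∑ k, C i j k * M p.1 j * M p.2 k

lemma flat_congrAct3 {m e : ℕ} (C : Fin m → Fin m → Fin m → ℝ) (M : Matrix (Fin e) (Fin m) ℝ) :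
    (Matrix.of fun (α : Fin e) (p : Fin e × Fin e) => congrAct3 C M α p.1 p.2) = M * flatW C M := by
  ext α p
  simp only [Matrix.of_apply, congrAct3, flatW, Matrix.mul_apply, Finset.mul_sum]
  refine Finset.sum_congr rfl fun i _ => Finset.sum_congr rfl fun j _ =>
    Finset.sum_congr rfl fun k _ => by ring

lemma isUnit_of_rank_eq {n : ℕ} (A : Matrix (Fin n) (Fin n) ℝ) (h : A.rank = n) : IsUnit A := by
  rw [← Matrix.mulVec_surjective_iff_isUnit]
  have hr : LinearMap.range A.mulVecLin = ⊤ := by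
    apply Submodule.eq_top_of_finrank_eq
    rw [Module.finrank_fintype_fun_eq_card, Fintype.card_fin]
    exact h
  intro v
  obtain ⟨w, hw⟩ := LinearMap.range_eq_top.mp hr v
  exact ⟨w, hw⟩

lemma rank_lt_of_not_isUnit {n : ℕ} (A : Matrix (Fin n) (Fin n) ℝ) (h : ¬ IsUnit A) :
    A.rank < n := by
  rcases lt_or_eq_of_le (A.rank_le_card_width.trans (Fintype.card_fin n).le) with h' | h'
  · exact h'
  · exact absurd (isUnit_of_rank_eq A h') h

lemma pinv_mul_self {d m : ℕ} (X : Matrix (Fin d) (Fin m) ℝ) (hX : X.rank = m) :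
    ((Xᵀ * X)⁻¹ * Xᵀ) * X = 1 := by
  have hu : IsUnit (Xᵀ * X) := isUnit_of_rank_eq _ (by rw [Matrix.rank_transpose_mul_self, hX])
  rw [Matrix.mul_assoc]
  exact Matrix.nonsing_inv_mul _ ((Matrix.isUnit_iff_isUnit_det _).mp hu)

lemma frobM_flat {m : ℕ} (T : Fin m → Fin m → Fin m → ℝ) :
    frobM (Matrix.of fun i (p : Fin m × Fin m) => T i p.1 p.2) = frobT T := by
  unfold frobM frobT
  congr 1
  refine Finset.sum_congr rfl fun i _ => ?_
  exact Fintype.sum_prod_type _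

lemma frobT_nonneg {d : ℕ} (T : Fin d → Fin d → Fin d → ℝ) : 0 ≤ frobT T := Real.sqrt_nonneg _
lemma frobM_nonneg {a b : Type*} [Fintype a] [Fintype b] (M : Matrix a b ℝ) : 0 ≤ frobM M :=
  Real.sqrt_nonneg _

/-- Case where `X⁺ * Y` is singular. -/
lemma case_singular {m d : ℕ} (C : Fin m → Fin m → Fin m → ℝ)
    (X : Matrix (Fin d) (Fin m) ℝ) (hX : X.rank = m)
    (S : Fin d → Fin d → Fin d → ℝ) (Y : Matrix (Fin d) (Fin m) ℝ)
    (hY : congrAct3 C Y = S) (hM : ¬ IsUnit ((Xᵀ * X)⁻¹ * Xᵀ * Y)) :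
    ∃ A : Matrix (Fin m) (Fin m × Fin m) ℝ, A.rank < m ∧
      frobM (flat1 C - A) ≤ frobM ((Xᵀ * X)⁻¹ * Xᵀ) ^ 3 * frobT (congrAct3 C X - S) := by
  set P := (Xᵀ * X)⁻¹ * Xᵀ with hP
  have hPX : P * X = 1 := pinv_mul_self X hX
  set M := P * Y with hMdef
  refine ⟨M * flatW C M, ?_, ?_⟩
  · exact lt_of_le_of_lt (Matrix.rank_mul_le_left M (flatW C M)) (rank_lt_of_not_isUnit M hM)
  · have key : congrAct3 (congrAct3 C X - S) P =
        fun α β γ => C α β γ - congrAct3 C M α β γ := by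
      have hsub : congrAct3 (congrAct3 C X - S) P =
          fun α β γ => congrAct3 (congrAct3 C X) P α β γ - congrAct3 S P α β γ :=
        congrAct3_sub (congrAct3 C X) S P
      rw [hsub]
      have h1 : congrAct3 (congrAct3 C X) P = C := by
        rw [← congrAct3_comp, hPX, congrAct3_one]
      have h2 : congrAct3 S P = congrAct3 C M := by
        rw [← hY, ← congrAct3_comp]
      rw [h1, h2]
    have hA : flat1 C - M * flatW C M =
        Matrix.of fun i (p : Fin m × Fin m) =>
          (congrAct3 (congrAct3 C X - S) P) i p.1 p.2 := by
      rw [← flat_congrAct3, key]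
      ext i p
      simp [flat1]
    rw [hA, frobM_flat]
    exact frobT_congrAct3_le _ P

/-- The core lemma for the first flattening. -/
lemma main1 {m d : ℕ} (C : Fin m → Fin m → Fin m → ℝ)
    (htriv : ∀ Z : Matrix (Fin m) (Fin m) ℝ, IsUnit Z → congrAct3 C Z = C → Z = 1)
    (X : Matrix (Fin d) (Fin m) ℝ) (hX : X.rank = m)
    (S : Fin d → Fin d → Fin d → ℝ) (Y₁ Y₂ : Matrix (Fin d) (Fin m) ℝ)
    (hne : Y₁ ≠ Y₂) (hY₁ : congrAct3 C Y₁ = S) (hY₂ : congrAct3 C Y₂ = S) :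
    ∃ A : Matrix (Fin m) (Fin m × Fin m) ℝ, A.rank < m ∧
      frobM (flat1 C - A) ≤ frobM ((Xᵀ * X)⁻¹ * Xᵀ) ^ 3 * frobT (congrAct3 C X - S) := by
  set P := (Xᵀ * X)⁻¹ * Xᵀ with hP
  by_cases h1 : IsUnit ((Xᵀ * X)⁻¹ * Xᵀ * Y₁)
  · by_cases h2 : IsUnit ((Xᵀ * X)⁻¹ * Xᵀ * Y₂)
    · -- both full-rank case
      by_cases hcr : (flat1 C).rank < m
      · refine ⟨flat1 C, hcr, ?_⟩
        rw [sub_self]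
        have : frobM (0 : Matrix (Fin m) (Fin m × Fin m) ℝ) = 0 := by
          simp [frobM]
        rw [this]
        exact mul_nonneg (pow_nonneg (frobM_nonneg _) 3) (frobT_nonneg _)
      · exfalso
        have hcrank : (flat1 C).rank = m :=
          le_antisymm ((flat1 C).rank_le_card_height.trans (Fintype.card_fin m).le)
            (not_lt.mp hcr)
        have hXtX : IsUnit (Xᵀ * X) :=
          isUnit_of_rank_eq _ (by rw [Matrix.rank_transpose_mul_self, hX])
        have hXtXdet : IsUnit (Xᵀ * X).det := (Matrix.isUnit_iff_isUnit_det _).mp hXtX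
        -- both Y₁ Y₂ have rank m
        have hrank : ∀ Y : Matrix (Fin d) (Fin m) ℝ, IsUnit ((Xᵀ * X)⁻¹ * Xᵀ * Y) →
            Y.rank = m := by
          intro Y hY
          have hXY : Xᵀ * Y = (Xᵀ * X) * ((Xᵀ * X)⁻¹ * Xᵀ * Y) := by
            rw [Matrix.mul_assoc ((Xᵀ * X)⁻¹) (Xᵀ) Y, ← Matrix.mul_assoc (Xᵀ * X)
              ((Xᵀ * X)⁻¹) (Xᵀ * Y), Matrix.mul_nonsing_inv _ hXtXdet, Matrix.one_mul]
          have hu : IsUnit (Xᵀ * Y) := by rw [hXY]; exact hXtX.mul hY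
          have h1 : (Xᵀ * Y).rank = m := by
            rw [Matrix.rank_of_isUnit _ hu, Fintype.card_fin]
          refine le_antisymm (Y.rank_le_card_width.trans (Fintype.card_fin m).le) ?_
          calc m = (Xᵀ * Y).rank := h1.symm
            _ ≤ Y.rank := Matrix.rank_mul_le_right _ _
        have hr1 : Y₁.rank = m := hrank Y₁ h1
        have hr2 : Y₂.rank = m := hrank Y₂ h2
        have hP1 : ((Y₁ᵀ * Y₁)⁻¹ * Y₁ᵀ) * Y₁ = 1 := pinv_mul_self Y₁ hr1
        have hP2 : ((Y₂ᵀ * Y₂)⁻¹ * Y₂ᵀ) * Y₂ = 1 := pinv_mul_self Y₂ hr2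
        -- flattenings of S
        have hflat1 : Matrix.of (fun (α : Fin d) (p : Fin d × Fin d) => S α p.1 p.2) =
            Y₁ * flatW C Y₁ := by rw [← hY₁]; exact flat_congrAct3 C Y₁
        have hflat2 : Matrix.of (fun (α : Fin d) (p : Fin d × Fin d) => S α p.1 p.2) =
            Y₂ * flatW C Y₂ := by rw [← hY₂]; exact flat_congrAct3 C Y₂
        have hflatS : Y₁ * flatW C Y₁ = Y₂ * flatW C Y₂ := by rw [← hflat1, hflat2]
        -- flatW factorization and right inverse of the Kronecker-like factor
        have hKfact : ∀ Y : Matrix (Fin d) (Fin m) ℝ, flatW C Y =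
            flat1 C * (Matrix.of fun (p : Fin m × Fin m) (q : Fin d × Fin d) =>
              Y q.1 p.1 * Y q.2 p.2) := by
          intro Y
          ext i q
          rw [Matrix.mul_apply, Fintype.sum_prod_type]
          simp only [flatW, flat1, Matrix.of_apply]
          refine Finset.sum_congr rfl fun j _ => Finset.sum_congr rfl fun k _ => by ring
        have hKright : ∀ (Y : Matrix (Fin d) (Fin m) ℝ) (PY : Matrix (Fin m) (Fin d) ℝ),
            PY * Y = 1 →
            (Matrix.of fun (p : Fin m × Fin m) (q : Fin d × Fin d) =>
              Y q.1 p.1 * Y q.2 p.2) *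
            (Matrix.of fun (q : Fin d × Fin d) (p : Fin m × Fin m) =>
              PY p.1 q.1 * PY p.2 q.2) = 1 := by
          intro Y PY hPY
          ext p p'
          rw [Matrix.mul_apply, Fintype.sum_prod_type]
          have e1 : ∀ (β : Fin d), ∀ (γ : Fin d),
              (Matrix.of fun (p : Fin m × Fin m) (q : Fin d × Fin d) =>
                Y q.1 p.1 * Y q.2 p.2) p (β, γ) *
              (Matrix.of fun (q : Fin d × Fin d) (p : Fin m × Fin m) =>
                PY p.1 q.1 * PY p.2 q.2) (β, γ) p' =
              (Y β p.1 * PY p'.1 β) * (Y γ p.2 * PY p'.2 γ) := by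
            intro β γ; simp only [Matrix.of_apply]; ring
          calc (∑ β, ∑ γ, (Matrix.of fun (p : Fin m × Fin m) (q : Fin d × Fin d) =>
                Y q.1 p.1 * Y q.2 p.2) p (β, γ) *
              (Matrix.of fun (q : Fin d × Fin d) (p : Fin m × Fin m) =>
                PY p.1 q.1 * PY p.2 q.2) (β, γ) p')
              = (∑ β, Y β p.1 * PY p'.1 β) * (∑ γ, Y γ p.2 * PY p'.2 γ) := by
                rw [Finset.sum_mul_sum]
                refine Finset.sum_congr rfl fun β _ => Finset.sum_congr rfl fun γ _ => e1 β γ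
            _ = (PY * Y) p'.1 p.1 * (PY * Y) p'.2 p.2 := by
                rw [Matrix.mul_apply, Matrix.mul_apply]
                congr 1
                · exact Finset.sum_congr rfl fun β _ => by ring
                · exact Finset.sum_congr rfl fun γ _ => by ring
            _ = (1 : Matrix (Fin m × Fin m) (Fin m × Fin m) ℝ) p p' := by
                rw [hPY]
                obtain ⟨j, k⟩ := p
                obtain ⟨j', k'⟩ := p'
                simp only [Matrix.one_apply, Prod.mk.injEq]
                have hiff : (j = j' ∧ k = k') ↔ (j' = j ∧ k' = k) :=
                  ⟨fun h => ⟨h.1.symm, h.2.symm⟩, fun h => ⟨h.1.symm, h.2.symm⟩⟩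
                rw [if_congr hiff rfl rfl]
                by_cases hj : j' = j <;> by_cases hk : k' = k <;> simp [hj, hk]
        -- G₂ has full rank m
        have hGH : flatW C Y₂ * (Matrix.of fun (q : Fin d × Fin d) (p : Fin m × Fin m) =>
            ((Y₂ᵀ * Y₂)⁻¹ * Y₂ᵀ) p.1 q.1 * ((Y₂ᵀ * Y₂)⁻¹ * Y₂ᵀ) p.2 q.2) = flat1 C := by
          rw [hKfact Y₂, Matrix.mul_assoc, hKright Y₂ _ hP2, Matrix.mul_one]
        have hG2rank : (flatW C Y₂).rank = m := by
          refine le_antisymm ((flatW C Y₂).rank_le_card_height.trans (Fintype.card_fin m).le) ?_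
          calc m = (flat1 C).rank := hcrank.symm
            _ = (flatW C Y₂ * (_ : Matrix (Fin d × Fin d) (Fin m × Fin m) ℝ)).rank := by rw [hGH]
            _ ≤ (flatW C Y₂).rank := Matrix.rank_mul_le_left _ _
        have hGGt : IsUnit (flatW C Y₂ * (flatW C Y₂)ᵀ) :=
          isUnit_of_rank_eq _ (by rw [Matrix.rank_self_mul_transpose, hG2rank])
        set R := (flatW C Y₂)ᵀ * (flatW C Y₂ * (flatW C Y₂)ᵀ)⁻¹ with hR
        have hGR : flatW C Y₂ * R = 1 := by
          rw [hR, ← Matrix.mul_assoc]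
          exact Matrix.mul_nonsing_inv _ ((Matrix.isUnit_iff_isUnit_det _).mp hGGt)
        set Z := flatW C Y₁ * R with hZ
        have hYZ : Y₁ * Z = Y₂ := by
          rw [hZ, ← Matrix.mul_assoc, hflatS, Matrix.mul_assoc, hGR, Matrix.mul_one]
        have hZrank : Z.rank = m := by
          refine le_antisymm (Z.rank_le_card_width.trans (Fintype.card_fin m).le) ?_
          calc m = Y₂.rank := hr2.symm
            _ = (Y₁ * Z).rank := by rw [hYZ]
            _ ≤ Z.rank := Matrix.rank_mul_le_right _ _
        have hZu : IsUnit Z := isUnit_of_rank_eq Z hZrank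
        have hstab : congrAct3 C Z = C := by
          have h1' : congrAct3 (congrAct3 C Z) Y₁ = congrAct3 C Y₁ := by
            rw [← congrAct3_comp, hYZ, hY₂, hY₁]
          have h3 : congrAct3 (congrAct3 C Z) (((Y₁ᵀ * Y₁)⁻¹ * Y₁ᵀ) * Y₁) =
              congrAct3 C (((Y₁ᵀ * Y₁)⁻¹ * Y₁ᵀ) * Y₁) := by
            rw [congrAct3_comp (congrAct3 C Z) Y₁ ((Y₁ᵀ * Y₁)⁻¹ * Y₁ᵀ),
              congrAct3_comp C Y₁ ((Y₁ᵀ * Y₁)⁻¹ * Y₁ᵀ), h1']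
          rw [hP1, congrAct3_one, congrAct3_one] at h3
          exact h3
        have : Z = 1 := htriv Z hZu hstab
        rw [this, Matrix.mul_one] at hYZ
        exact hne hYZ
    · exact case_singular C X hX S Y₂ hY₂ h2
  · exact case_singular C X hX S Y₁ hY₁ h1

lemma swap12_congr {m d : ℕ} (C : Fin m → Fin m → Fin m → ℝ) (Z : Matrix (Fin d) (Fin m) ℝ) :
    congrAct3 (fun i j k => C j i k) Z = fun a b c => congrAct3 C Z b a c := by
  funext a b c
  show (∑ i, ∑ j, ∑ k, C j i k * Z a i * Z b j * Z c k) = _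
  rw [Finset.sum_comm]
  simp only [congrAct3]
  exact Finset.sum_congr rfl fun _ _ => Finset.sum_congr rfl fun _ _ =>
    Finset.sum_congr rfl fun _ _ => by ring

lemma rot_congr {m d : ℕ} (C : Fin m → Fin m → Fin m → ℝ) (Z : Matrix (Fin d) (Fin m) ℝ) :
    congrAct3 (fun i j k => C j k i) Z = fun a b c => congrAct3 C Z b c a := by
  funext a b c
  show (∑ i, ∑ j, ∑ k, C j k i * Z a i * Z b j * Z c k) = _
  rw [Finset.sum_comm]
  rw [show (∑ j, ∑ i, ∑ k, C j k i * Z a i * Z b j * Z c k) =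
      ∑ j, ∑ k, ∑ i, C j k i * Z a i * Z b j * Z c k from
    Finset.sum_congr rfl fun j _ => Finset.sum_comm]
  simp only [congrAct3]
  exact Finset.sum_congr rfl fun _ _ => Finset.sum_congr rfl fun _ _ =>
    Finset.sum_congr rfl fun _ _ => by ring

lemma frobT_swap12 {d : ℕ} (T : Fin d → Fin d → Fin d → ℝ) :
    frobT (fun a b c => T b a c) = frobT T := by
  unfold frobT
  congr 1
  exact Finset.sum_comm

lemma frobT_rot {d : ℕ} (T : Fin d → Fin d → Fin d → ℝ) :
    frobT (fun a b c => T b c a) = frobT T := by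
  unfold frobT
  congr 1
  rw [Finset.sum_comm]
  exact Finset.sum_congr rfl fun b _ => Finset.sum_comm

/-- If `C` has trivial real stabilizer, `X ∈ ℝ^{d×m}` has rank `m` with
pseudo-inverse `X⁺ = (XᵀX)⁻¹Xᵀ`, and `S` is a non-identifiable signature tensor,
then each flattening of `C` is within Frobenius distance
`‖X⁺‖³ · ‖[[C;X,X,X]] − S‖` of a matrix of rank less than `m`. -/
theorem flattening_close_to_low_rank_of_nonidentifiable (m d : ℕ)
    (C : Fin m → Fin m → Fin m → ℝ)
    (htriv : ∀ Z : Matrix (Fin m) (Fin m) ℝ, IsUnit Z → congrAct3 C Z = C → Z = 1)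
    (X : Matrix (Fin d) (Fin m) ℝ) (hX : X.rank = m)
    (S : Fin d → Fin d → Fin d → ℝ) (Y₁ Y₂ : Matrix (Fin d) (Fin m) ℝ)
    (hne : Y₁ ≠ Y₂) (hY₁ : congrAct3 C Y₁ = S) (hY₂ : congrAct3 C Y₂ = S) :
    (∃ A : Matrix (Fin m) (Fin m × Fin m) ℝ, A.rank < m ∧
      frobM (Matrix.of (fun (i : Fin m) (p : Fin m × Fin m) => C i p.1 p.2) - A)
        ≤ frobM ((Xᵀ * X)⁻¹ * Xᵀ) ^ 3 * frobT (congrAct3 C X - S)) ∧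
    (∃ A : Matrix (Fin m) (Fin m × Fin m) ℝ, A.rank < m ∧
      frobM (Matrix.of (fun (j : Fin m) (p : Fin m × Fin m) => C p.1 j p.2) - A)
        ≤ frobM ((Xᵀ * X)⁻¹ * Xᵀ) ^ 3 * frobT (congrAct3 C X - S)) ∧
    (∃ A : Matrix (Fin m) (Fin m × Fin m) ℝ, A.rank < m ∧
      frobM (Matrix.of (fun (k : Fin m) (p : Fin m × Fin m) => C p.1 p.2 k) - A)
        ≤ frobM ((Xᵀ * X)⁻¹ * Xᵀ) ^ 3 * frobT (congrAct3 C X - S)) := by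
  refine ⟨?_, ?_, ?_⟩
  · obtain ⟨A, hA, hb⟩ := main1 C htriv X hX S Y₁ Y₂ hne hY₁ hY₂
    exact ⟨A, hA, hb⟩
  · -- mode 2
    have htriv2 : ∀ Z : Matrix (Fin m) (Fin m) ℝ, IsUnit Z →
        congrAct3 (fun i j k => C j i k) Z = (fun i j k => C j i k) → Z = 1 := by
      intro Z hZ hstab
      apply htriv Z hZ
      rw [swap12_congr] at hstab
      funext a b c
      exact congrFun (congrFun (congrFun hstab b) a) c
    have hY₁2 : congrAct3 (fun i j k => C j i k) Y₁ = (fun a b c => S b a c) := by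
      rw [swap12_congr]; funext a b c; rw [hY₁]
    have hY₂2 : congrAct3 (fun i j k => C j i k) Y₂ = (fun a b c => S b a c) := by
      rw [swap12_congr]; funext a b c; rw [hY₂]
    obtain ⟨A, hA, hb⟩ := main1 (fun i j k => C j i k) htriv2 X hX
      (fun a b c => S b a c) Y₁ Y₂ hne hY₁2 hY₂2
    refine ⟨A, hA, ?_⟩
    have hT : congrAct3 (fun i j k => C j i k) X - (fun a b c => S b a c) =
        fun a b c => (congrAct3 C X - S) b a c := by
      funext a b c
      have h := congrFun (congrFun (congrFun (swap12_congr C X) a) b) c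
      simp only [Pi.sub_apply]
      rw [h]
    rw [hT, frobT_swap12] at hb
    exact hb
  · -- mode 3
    have htriv3 : ∀ Z : Matrix (Fin m) (Fin m) ℝ, IsUnit Z →
        congrAct3 (fun i j k => C j k i) Z = (fun i j k => C j k i) → Z = 1 := by
      intro Z hZ hstab
      apply htriv Z hZ
      rw [rot_congr] at hstab
      funext a b c
      exact congrFun (congrFun (congrFun hstab c) a) b
    have hY₁3 : congrAct3 (fun i j k => C j k i) Y₁ = (fun a b c => S b c a) := by
      rw [rot_congr]; funext a b c; rw [hY₁]
    have hY₂3 : congrAct3 (fun i j k => C j k i) Y₂ = (fun a b c => S b c a) := by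
      rw [rot_congr]; funext a b c; rw [hY₂]
    obtain ⟨A, hA, hb⟩ := main1 (fun i j k => C j k i) htriv3 X hX
      (fun a b c => S b c a) Y₁ Y₂ hne hY₁3 hY₂3
    refine ⟨A, hA, ?_⟩
    have hT : congrAct3 (fun i j k => C j k i) X - (fun a b c => S b c a) =
        fun a b c => (congrAct3 C X - S) b c a := by
      funext a b c
      have h := congrFun (congrFun (congrFun (rot_congr C X) a) b) c
      simp only [Pi.sub_apply]
      rw [h]
    rw [hT, frobT_rot] at hb
    exact hb
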